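/- Let S = U ++ [b] ++ V be a string in which b does not occur in V and V is nonempty (so the displayed occurrence of b is the last occurrence of b in S, and it is not the last character of S). Then for every string T, the delete–replace edit distance satisfies d_DR(S, T ++ [b]) = min( |V| + d_DR(U, T), 1 + d_DR(S.dropLast, T) ) (as elements of ℕ∞), corresponding respectively to deleting the suffix V and matching b with its last occurrence in S, and to replacing the last character of S by b. -/

import Mathlib

/-- `StepsIn R k S T` holds if there is a sequence of exactly `k` steps of the
relation `R` transforming `S` into `T`. -/
def StepsIn {α : Type*} (R : List α → List α → Prop) : ℕ → List α → List α → Prop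
  | 0, S, T => S = T
  | n + 1, S, T => ∃ M, R S M ∧ StepsIn R n M T

/-- A single delete or replace operation on a string. -/
inductive DRStep {α : Type*} : List α → List α → Prop
  | del (U V : List α) (c : α) : DRStep (U ++ [c] ++ V) (U ++ V)
  | rep (U V : List α) (a b : α) (hab : a ≠ b) : DRStep (U ++ [a] ++ V) (U ++ [b] ++ V)

/-- A single insert or replace operation on a string. -/
inductive IRStep {α : Type*} : List α → List α → Prop
  | ins (U V : List α) (c : α) : IRStep (U ++ V) (U ++ [c] ++ V)
  | rep (U V : List α) (a b : α) (hab : a ≠ b) : IRStep (U ++ [a] ++ V) (U ++ [b] ++ V)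

/-- The delete–replace edit distance, as an extended natural number:
the minimum number of single-character deletions and replacements
transforming `S` into `T`, or `⊤` if no such sequence exists. -/
noncomputable def dDR {α : Type*} (S T : List α) : ℕ∞ :=
  sInf {n : ℕ∞ | ∃ k : ℕ, StepsIn DRStep k S T ∧ n = k}

/-- The insert–replace edit distance, as an extended natural number:
the minimum number of single-character insertions and replacements
transforming `S` into `T`, or `⊤` if no such sequence exists. -/
noncomputable def dIR {α : Type*} (S T : List α) : ℕ∞ :=
  sInf {n : ℕ∞ | ∃ k : ℕ, StepsIn IRStep k S T ∧ n = k}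

section EditAux
variable {α : Type*}

lemma stepsIn_trans {R : List α → List α → Prop} :
    ∀ {j : ℕ} {k : ℕ} {S M T : List α}, StepsIn R j S M → StepsIn R k M T →
      StepsIn R (j + k) S T := by
  intro j
  induction j with
  | zero =>
    intro k S M T h1 h2
    cases h1
    simpa using h2
  | succ n ih =>
    intro k S M T h1 h2
    obtain ⟨M', hM', h1'⟩ := h1
    have : n + 1 + k = (n + k) + 1 := by omega
    rw [this]
    exact ⟨M', hM', ih h1' h2⟩

lemma stepsIn_snoc {R : List α → List α → Prop} {k : ℕ} {S M N : List α}
    (h1 : StepsIn R k S M) (h2 : R M N) : StepsIn R (k + 1) S N :=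
  stepsIn_trans h1 ⟨N, h2, rfl⟩

lemma DRStep.append_right {S M : List α} (h : DRStep S M) (Z : List α) :
    DRStep (S ++ Z) (M ++ Z) := by
  cases h with
  | del U V c => simpa [List.append_assoc] using DRStep.del U (V ++ Z) c
  | rep U V a b hab => simpa [List.append_assoc] using DRStep.rep U (V ++ Z) a b hab

lemma stepsIn_append_right : ∀ {k : ℕ} {S T : List α}, StepsIn DRStep k S T → ∀ (Z : List α),
    StepsIn DRStep k (S ++ Z) (T ++ Z) := by
  intro k
  induction k with
  | zero => intro S T h Z; cases h; rfl
  | succ n ih =>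
    intro S T h Z
    obtain ⟨M, hM, h'⟩ := h
    exact ⟨M ++ Z, hM.append_right Z, ih h' Z⟩

lemma stepsIn_del_suffix (X : List α) : ∀ (V : List α), StepsIn DRStep V.length (X ++ V) X := by
  intro V
  induction V with
  | nil => show X ++ [] = X; simp
  | cons v V' ih =>
    exact ⟨X ++ V', by simpa using DRStep.del X V' v, ih⟩

lemma DRStep.rev {S M : List α} (h : DRStep S M) : DRStep S.reverse M.reverse := by
  cases h with
  | del U V c =>
    simpa [List.reverse_append, List.append_assoc] using DRStep.del V.reverse U.reverse c
  | rep U V a b hab =>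
    simpa [List.reverse_append, List.append_assoc] using DRStep.rep V.reverse U.reverse a b hab

/-- An alignment of `S` onto `T` with `n` edits (matches are free, replaces and
deletions cost 1), working from the head. -/
inductive Align : List α → List α → ℕ → Prop
  | nil : Align [] [] 0
  | match_ {S T : List α} {n : ℕ} (a : α) : Align S T n → Align (a :: S) (a :: T) n
  | rep {S T : List α} {n : ℕ} {a b : α} (hab : a ≠ b) :
      Align S T n → Align (a :: S) (b :: T) (n + 1)
  | del {S T : List α} {n : ℕ} (a : α) : Align S T n → Align (a :: S) T (n + 1)

lemma align_refl : ∀ (S : List α), Align S S 0 := by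
  intro S
  induction S with
  | nil => exact .nil
  | cons a S ih => exact .match_ a ih

lemma align_del_merge :
    ∀ (X : List α) {Y T : List α} {n : ℕ} (c : α), Align (X ++ Y) T n →
      ∃ m ≤ n + 1, Align (X ++ c :: Y) T m := by
  intro X
  induction X with
  | nil => intro Y T n c h; exact ⟨n + 1, le_refl _, .del c h⟩
  | cons a X' ih =>
    intro Y T n c h
    rw [List.cons_append] at h
    cases h with
    | match_ _ h' =>
      obtain ⟨m, hm, h''⟩ := ih c h'
      exact ⟨m, by omega, .match_ a h''⟩
    | rep hab h' =>
      obtain ⟨m, hm, h''⟩ := ih c h'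
      exact ⟨m + 1, by omega, .rep hab h''⟩
    | del _ h' =>
      obtain ⟨m, hm, h''⟩ := ih c h'
      exact ⟨m + 1, by omega, .del a h''⟩

lemma align_rep_merge :
    ∀ (X : List α) {Y T : List α} {n : ℕ} {c c' : α}, c ≠ c' → Align (X ++ c' :: Y) T n →
      ∃ m ≤ n + 1, Align (X ++ c :: Y) T m := by
  intro X
  induction X with
  | nil =>
    intro Y T n c c' hcc' h
    rw [List.nil_append] at h
    cases h with
    | match_ _ h' => exact ⟨n + 1, le_refl _, .rep hcc' h'⟩
    | @rep _ _ _ _ d hab h' =>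
      by_cases hcd : c = d
      · subst hcd; exact ⟨_, by omega, .match_ c h'⟩
      · exact ⟨_, by omega, .rep hcd h'⟩
    | del _ h' => exact ⟨_, by omega, .del c h'⟩
  | cons a X' ih =>
    intro Y T n c c' hcc' h
    rw [List.cons_append] at h
    cases h with
    | match_ _ h' =>
      obtain ⟨m, hm, h''⟩ := ih hcc' h'
      exact ⟨m, by omega, .match_ a h''⟩
    | rep hab h' =>
      obtain ⟨m, hm, h''⟩ := ih hcc' h'
      exact ⟨m + 1, by omega, .rep hab h''⟩
    | del _ h' =>
      obtain ⟨m, hm, h''⟩ := ih hcc' h'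
      exact ⟨m + 1, by omega, .del a h''⟩

lemma step_align_merge {S M T : List α} {n : ℕ} (hs : DRStep S M) (h : Align M T n) :
    ∃ m ≤ n + 1, Align S T m := by
  cases hs with
  | del X Y c =>
    rw [List.append_assoc, List.singleton_append]
    exact align_del_merge X c h
  | rep X Y c c' hcc' =>
    rw [List.append_assoc, List.singleton_append] at h ⊢
    exact align_rep_merge X hcc' h

lemma align_drop_head :
    ∀ (X : List α) {Y : List α} {n : ℕ} {c : α}, Align X (c :: Y) n →
      ∃ m ≤ n + 1, Align X Y m := by
  intro X
  induction X with
  | nil => intro Y n c h; cases h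
  | cons a X' ih =>
    intro Y n c h
    cases h with
    | match_ _ h' => exact ⟨n + 1, le_refl _, .del a h'⟩
    | rep hab h' => exact ⟨_, by omega, .del a h'⟩
    | del _ h' =>
      obtain ⟨m, hm, h''⟩ := ih h'
      exact ⟨m + 1, by omega, .del a h''⟩

lemma align_strip {X Y : List α} {n : ℕ} {b : α} (h : Align (b :: X) (b :: Y) n) :
    ∃ m ≤ n, Align X Y m := by
  cases h with
  | match_ _ h' => exact ⟨n, le_refl _, h'⟩
  | rep hab h' => exact absurd rfl hab
  | del _ h' =>
    obtain ⟨m, hm, h''⟩ := align_drop_head _ h'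
    exact ⟨m, by omega, h''⟩

lemma steps_to_align :
    ∀ {k : ℕ} {S T : List α}, StepsIn DRStep k S T → ∃ m ≤ k, Align S.reverse T.reverse m := by
  intro k
  induction k with
  | zero => intro S T h; cases h; exact ⟨0, le_refl _, align_refl _⟩
  | succ n ih =>
    intro S T h
    obtain ⟨M, hSM, hMT⟩ := h
    obtain ⟨m, hm, hal⟩ := ih hMT
    obtain ⟨m', hm', hal'⟩ := step_align_merge hSM.rev hal
    exact ⟨m', by omega, hal'⟩

lemma align_to_steps {S T : List α} {n : ℕ} (h : Align S T n) :
    StepsIn DRStep n S.reverse T.reverse := by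
  induction h with
  | nil => rfl
  | match_ a _ ih => simpa using stepsIn_append_right ih [a]
  | @rep S' T' n' a b hab _ ih =>
    have h1 : StepsIn DRStep n' (S'.reverse ++ [a]) (T'.reverse ++ [a]) :=
      stepsIn_append_right ih [a]
    have h2 : DRStep (T'.reverse ++ [a]) (T'.reverse ++ [b]) := by
      simpa using DRStep.rep T'.reverse [] a b hab
    simpa using stepsIn_snoc h1 h2
  | @del S' T' n' a _ ih =>
    refine ⟨S'.reverse, ?_, by simpa using ih⟩
    simpa using DRStep.del S'.reverse [] a

lemma align_main :
    ∀ (W : List α) {U' T' : List α} {b : α} {n : ℕ}, W ≠ [] → b ∉ W →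
      Align (W ++ b :: U') (b :: T') n →
      (∃ m, Align U' T' m ∧ m + W.length ≤ n) ∨
      (∃ m, Align (W.tail ++ b :: U') T' m ∧ m + 1 ≤ n) := by
  intro W
  induction W with
  | nil => simp
  | cons w W' ih =>
    intro U' T' b n _ hb h
    have hwb : w ≠ b := fun h' => hb (by simp [h'])
    rw [List.cons_append] at h
    cases h with
    | match_ _ h' => exact absurd rfl hwb
    | rep hab h' => exact Or.inr ⟨_, h', le_refl _⟩
    | del _ h' =>
      by_cases hW' : W' = []
      · subst hW'
        rw [List.nil_append] at h'
        obtain ⟨m, hm, hal⟩ := align_strip h'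
        exact Or.inl ⟨m, hal, by simp; omega⟩
      · have hb' : b ∉ W' := fun hh => hb (List.mem_cons_of_mem _ hh)
        rcases ih hW' hb' h' with ⟨m, hal, hle⟩ | ⟨m, hal, hle⟩
        · exact Or.inl ⟨m, hal, by simp at hle ⊢; omega⟩
        · obtain ⟨w', W'', rfl⟩ := List.exists_cons_of_ne_nil hW'
          refine Or.inr ⟨m + 1, ?_, by omega⟩
          show Align (w' :: W'' ++ b :: U') T' (m + 1)
          rw [List.cons_append]
          exact .del w' (by simpa using hal)

lemma dDR_le_of_steps {S T : List α} {k : ℕ} (h : StepsIn DRStep k S T) :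
    dDR S T ≤ (k : ℕ∞) :=
  sInf_le ⟨k, h, rfl⟩

lemma dDR_cases (S T : List α) :
    dDR S T = ⊤ ∨ ∃ k : ℕ, StepsIn DRStep k S T ∧ dDR S T = (k : ℕ∞) := by
  by_cases hne : {n : ℕ∞ | ∃ k : ℕ, StepsIn DRStep k S T ∧ n = k}.Nonempty
  · obtain ⟨k, hk, hEq⟩ := csInf_mem hne
    exact Or.inr ⟨k, hk, hEq⟩
  · left
    rw [Set.not_nonempty_iff_eq_empty] at hne
    rw [dDR, hne, sInf_empty]

end EditAux

theorem dDR_append_last_occurrence {α : Type*} [DecidableEq α]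
    (U V T : List α) (b : α) (hb : b ∉ V) (hV : V ≠ []) :
    dDR (U ++ [b] ++ V) (T ++ [b]) =
      min ((V.length : ℕ∞) + dDR U T)
        (1 + dDR (U ++ [b] ++ V).dropLast T) := by
  have hSd : (U ++ [b] ++ V).dropLast = U ++ [b] ++ V.dropLast := by
    obtain ⟨W, v, rfl⟩ : ∃ W v, V = W ++ [v] :=
      ⟨V.dropLast, V.getLast hV, (List.dropLast_append_getLast hV).symm⟩
    rw [show U ++ [b] ++ (W ++ [v]) = (U ++ [b] ++ W) ++ [v] from by
      simp [List.append_assoc]]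
    rw [List.dropLast_concat, List.dropLast_concat]
  apply le_antisymm
  · apply le_min
    · -- delete the suffix V, then edit U into T keeping the final b
      rcases dDR_cases U T with h | ⟨k, hk, h⟩
      · rw [h]; simp
      · rw [h]
        have p1 : StepsIn DRStep V.length (U ++ [b] ++ V) (U ++ [b]) :=
          stepsIn_del_suffix (U ++ [b]) V
        have p2 : StepsIn DRStep k (U ++ [b]) (T ++ [b]) := stepsIn_append_right hk [b]
        have := dDR_le_of_steps (stepsIn_trans p1 p2)
        calc dDR (U ++ [b] ++ V) (T ++ [b]) ≤ ((V.length + k : ℕ) : ℕ∞) := this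
          _ = (V.length : ℕ∞) + (k : ℕ∞) := by push_cast; rfl
    · -- edit dropLast into T keeping the last letter, then replace it by b
      rcases dDR_cases (U ++ [b] ++ V).dropLast T with h | ⟨k, hk, h⟩
      · rw [h]; simp
      · rw [h]
        obtain ⟨W, v, rfl⟩ : ∃ W v, V = W ++ [v] :=
          ⟨V.dropLast, V.getLast hV, (List.dropLast_append_getLast hV).symm⟩
        have hvb : v ≠ b := by
          intro hv
          exact hb (by simp [hv])
        have hS : U ++ [b] ++ (W ++ [v]) = (U ++ [b] ++ (W ++ [v])).dropLast ++ [v] := by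
          rw [hSd]; simp [List.append_assoc]
        have p1 : StepsIn DRStep k ((U ++ [b] ++ (W ++ [v])).dropLast ++ [v]) (T ++ [v]) :=
          stepsIn_append_right hk [v]
        have p2 : DRStep (T ++ [v]) (T ++ [b]) := by
          simpa using DRStep.rep T [] v b hvb
        rw [← hS] at p1
        have := dDR_le_of_steps (stepsIn_snoc p1 p2)
        calc dDR (U ++ [b] ++ (W ++ [v])) (T ++ [b]) ≤ ((k + 1 : ℕ) : ℕ∞) := this
          _ = 1 + (k : ℕ∞) := by push_cast; ring
  · -- every edit sequence can be analysed through its alignment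
    apply le_sInf
    rintro n ⟨k, hk, rfl⟩
    obtain ⟨m, hmk, hal⟩ := steps_to_align hk
    rw [show (T ++ [b]).reverse = b :: T.reverse by simp] at hal
    rw [show (U ++ [b] ++ V).reverse = V.reverse ++ b :: U.reverse by
      simp [List.reverse_append]] at hal
    have hW : V.reverse ≠ [] := by simpa
    have hbW : b ∉ V.reverse := by simpa
    rcases align_main V.reverse hW hbW hal with ⟨p, hal', hle⟩ | ⟨p, hal', hle⟩
    · have hst := align_to_steps hal'
      rw [List.reverse_reverse, List.reverse_reverse] at hst
      refine min_le_of_left_le ?_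
      have h1 : dDR U T ≤ (p : ℕ∞) := dDR_le_of_steps hst
      calc (V.length : ℕ∞) + dDR U T ≤ (V.length : ℕ∞) + (p : ℕ∞) := by
            exact add_le_add_right h1 _
        _ ≤ (k : ℕ∞) := by
            rw [List.length_reverse] at hle
            exact_mod_cast by omega
    · have hst := align_to_steps hal'
      have hrev : (V.reverse.tail ++ b :: U.reverse).reverse = U ++ [b] ++ V.dropLast := by
        rw [List.reverse_append]
        rw [List.tail_reverse, List.reverse_reverse]
        simp
      rw [hrev, List.reverse_reverse, ← hSd] at hst
      refine min_le_of_right_le ?_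
      have h1 : dDR (U ++ [b] ++ V).dropLast T ≤ (p : ℕ∞) := dDR_le_of_steps hst
      calc 1 + dDR (U ++ [b] ++ V).dropLast T ≤ 1 + (p : ℕ∞) := by
            exact add_le_add_right h1 _
        _ ≤ (k : ℕ∞) := by exact_mod_cast by omega
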